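/- Given a satisfying assignment of the CNF from the previous statement, setting D = {v_i : V_{i,3} = true}, A = {v_i : V_{i,1} = true}, and B = {v_i : v_i ∉ D ∪ A}, the graph G[V \ D] is bipartite with bipartition classes A \ D and B. -/
import Mathlib


/-- A set of vertices is independent: no edge joins two of its elements. -/
def IsIndep {V : Type*} (G : SimpleGraph V) (S : Set V) : Prop :=
  ∀ u ∈ S, ∀ v ∈ S, ¬ G.Adj u v

/-- `A`, `B` form a bipartition of the induced subgraph `G[X]`. -/
def BipartitionOn {V : Type*} (G : SimpleGraph V) (X A B : Set V) : Prop :=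
  A ∪ B = X ∧ Disjoint A B ∧ IsIndep G A ∧ IsIndep G B

/-- The induced subgraph `G[X]` is bipartite. -/
def BipartiteOn {V : Type*} (G : SimpleGraph V) (X : Set V) : Prop :=
  ∃ A B : Set V, BipartitionOn G X A B

/-- From a satisfying assignment of the CNF, setting `D = {v | a v 2}`, `A = {v | a v 0}`
and `B = {v | v ∉ D ∪ A}`, the graph `G[V \ D]` is bipartite with classes `A \ D` and `B`. -/
theorem stmt_8 {V : Type*} [Fintype V] (G : SimpleGraph V) (a : V → Fin 3 → Bool)
    (h1 : ∀ v : V, a v 0 = true ∨ a v 1 = true ∨ a v 2 = true)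
    (h2 : ∀ u v : V, G.Adj u v → (a u 0 = false ∨ a v 0 = false))
    (h3 : ∀ u v : V, G.Adj u v → (a u 1 = false ∨ a v 1 = false)) :
    BipartitionOn G ({v : V | a v 2 = true})ᶜ
      ({v : V | a v 0 = true} \ {v : V | a v 2 = true})
      {v : V | v ∉ ({v : V | a v 2 = true} ∪ {v : V | a v 0 = true})} := by
  refine ⟨?_, ?_, ?_, ?_⟩
  · ext v
    simp only [Set.mem_union, Set.mem_diff, Set.mem_setOf_eq, Set.mem_compl_iff]
    constructor
    · rintro (⟨_, h⟩ | h) <;> tauto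
    · intro h; by_cases h0 : a v 0 = true <;> tauto
  · rw [Set.disjoint_left]
    rintro v ⟨hv, _⟩ hv'
    exact hv' (Or.inr hv)
  · rintro u ⟨hu, _⟩ v ⟨hv, _⟩ hadj
    rcases h2 u v hadj with h | h <;> simp_all
  · rintro u hu v hv hadj
    simp only [Set.mem_setOf_eq, Set.mem_union] at hu hv
    push_neg at hu hv
    have hu1 : a u 1 = true := by rcases h1 u with h|h|h <;> simp_all
    have hv1 : a v 1 = true := by rcases h1 v with h|h|h <;> simp_all
    rcases h3 u v hadj with h | h <;> simp_all
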